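/- Let c > 0, a > 0, M ≥ 1, T > 0, b ∈ (0,1), β₀ ∈ (0,1). With β_F and β_L defined as the solutions of β' = (a/M)(1−β) on the influence window and β' = (c/M)β(1−β) otherwise (window first for β_F, window last for β_L, both starting at β₀), we have β_F(T) > β_L(T). -/

import Mathlib

open Set Real

private lemma myMonoOn {f f' : ℝ → ℝ} {t0 t1 : ℝ}
    (hc : ContinuousOn f (Icc t0 t1))
    (hd : ∀ t ∈ Ioo t0 t1, HasDerivAt f (f' t) t)
    (hnn : ∀ t ∈ Ioo t0 t1, 0 ≤ f' t) :
    MonotoneOn f (Icc t0 t1) := by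
  apply monotoneOn_of_deriv_nonneg (convex_Icc t0 t1) hc
  · rw [interior_Icc]
    exact fun t ht => ((hd t ht).differentiableAt).differentiableWithinAt
  · rw [interior_Icc]
    intro t ht
    rw [(hd t ht).deriv]
    exact hnn t ht

private lemma myConstOn {f : ℝ → ℝ} {t0 t1 : ℝ} (h01 : t0 ≤ t1)
    (hc : ContinuousOn f (Icc t0 t1))
    (hd : ∀ t ∈ Ioo t0 t1, HasDerivAt f 0 t) :
    f t1 = f t0 := by
  have h1 : MonotoneOn f (Icc t0 t1) := myMonoOn hc hd (fun t _ => le_refl 0)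
  have h2 : AntitoneOn f (Icc t0 t1) := by
    apply antitoneOn_of_deriv_nonpos (convex_Icc t0 t1) hc
    · rw [interior_Icc]
      exact fun t ht => ((hd t ht).differentiableAt).differentiableWithinAt
    · rw [interior_Icc]
      intro t ht
      rw [(hd t ht).deriv]
  have e0 : t0 ∈ Icc t0 t1 := ⟨le_refl _, h01⟩
  have e1 : t1 ∈ Icc t0 t1 := ⟨h01, le_refl _⟩
  exact le_antisymm (h2 e0 e1 h01) (h1 e0 e1 h01)

/-- Explicit solution of the linear ODE `f' = α (1 - f)` on an interval. -/
private lemma linear_flow {f : ℝ → ℝ} {α t0 t1 : ℝ} (h01 : t0 ≤ t1)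
    (hc : ContinuousOn f (Icc t0 t1))
    (hd : ∀ t ∈ Ioo t0 t1, HasDerivAt f (α * (1 - f t)) t) :
    1 - f t1 = (1 - f t0) * Real.exp (-α * (t1 - t0)) := by
  set g : ℝ → ℝ := fun t => (1 - f t) * Real.exp (α * t) with hg
  have hgd : ∀ t ∈ Ioo t0 t1, HasDerivAt g 0 t := by
    intro t ht
    have h1 : HasDerivAt (fun t => 1 - f t) (-(α * (1 - f t))) t := (hd t ht).const_sub 1
    have h2 : HasDerivAt (fun t => Real.exp (α * t)) (α * Real.exp (α * t)) t := by
      simpa [mul_comm, Function.comp_def] using (Real.hasDerivAt_exp (α * t)).comp t ((hasDerivAt_id t).const_mul α)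
    have := h1.mul h2
    exact this.congr_deriv (by ring)
  have hgc : ContinuousOn g (Icc t0 t1) :=
    (continuousOn_const.sub hc).mul
      ((Real.continuous_exp.comp (continuous_const.mul continuous_id)).continuousOn)
  have key : g t1 = g t0 := myConstOn h01 hgc hgd
  have hE : (Real.exp (α * t1)) ≠ 0 := Real.exp_ne_zero _
  have : (1 - f t1) * Real.exp (α * t1) = (1 - f t0) * Real.exp (α * t0) := key
  have h2 := congrArg (fun r => r * Real.exp (-(α * t1))) this
  rw [mul_assoc, mul_assoc, ← Real.exp_add, ← Real.exp_add] at h2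
  rw [show α * t1 + -(α * t1) = 0 by ring] at h2
  rw [show α * t0 + -(α * t1) = -α * (t1 - t0) by ring] at h2
  simpa using h2

/-- Explicit solution of the logistic ODE `f' = γ f (1 - f)` on an interval,
starting inside `(0,1)`. -/
private lemma logistic_flow {f : ℝ → ℝ} {γ t0 t1 : ℝ} (h01 : t0 ≤ t1) (hγ : 0 < γ)
    (hc : ContinuousOn f (Icc t0 t1))
    (hd : ∀ t ∈ Ioo t0 t1, HasDerivAt f (γ * f t * (1 - f t)) t)
    (h0 : f t0 ∈ Ioo (0:ℝ) 1) :
    f t1 ∈ Ioo (0:ℝ) 1 ∧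
      f t1 / (1 - f t1) = f t0 / (1 - f t0) * Real.exp (γ * (t1 - t0)) := by
  -- Step 1: f < 1 on the whole interval, via barrier h(t) = (1 - f t) exp(γ t)
  have hlt1 : ∀ t ∈ Icc t0 t1, f t < 1 := by
    intro t htmem
    set h : ℝ → ℝ := fun t => (1 - f t) * Real.exp (γ * t) with hh
    have hhd : ∀ s ∈ Ioo t0 t1,
        HasDerivAt h (γ * Real.exp (γ * s) * (1 - f s) ^ 2) s := by
      intro s hs
      have h1 : HasDerivAt (fun t => 1 - f t) (-(γ * f s * (1 - f s))) s := (hd s hs).const_sub 1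
      have h2 : HasDerivAt (fun t => Real.exp (γ * t)) (γ * Real.exp (γ * s)) s := by
        simpa [mul_comm, Function.comp_def] using (Real.hasDerivAt_exp (γ * s)).comp s ((hasDerivAt_id s).const_mul γ)
      have := h1.mul h2
      exact this.congr_deriv (by ring)
    have hhc : ContinuousOn h (Icc t0 t1) :=
      (continuousOn_const.sub hc).mul
        ((Real.continuous_exp.comp (continuous_const.mul continuous_id)).continuousOn)
    have hmono : MonotoneOn h (Icc t0 t1) :=
      myMonoOn hhc hhd (fun s _ => by positivity)
    have e0 : t0 ∈ Icc t0 t1 := ⟨le_refl _, h01⟩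
    have hle := hmono e0 htmem htmem.1
    have hpos0 : 0 < h t0 := by
      have : (0:ℝ) < 1 - f t0 := by linarith [h0.2]
      positivity
    have hpos : 0 < (1 - f t) * Real.exp (γ * t) := lt_of_lt_of_le hpos0 hle
    rcases mul_pos_iff.mp hpos with ⟨h1, _⟩ | ⟨_, h2⟩
    · linarith
    · exact absurd (Real.exp_pos (γ * t)) (by linarith)
  have hne : ∀ t ∈ Icc t0 t1, (1 : ℝ) - f t ≠ 0 := fun t ht => by
    have := hlt1 t ht; intro h; linarith [sub_eq_zero.mp h]
  -- Step 2: w = f/(1-f) satisfies w' = γ w on the interior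
  set w : ℝ → ℝ := fun t => f t / (1 - f t) with hw
  have hwd : ∀ t ∈ Ioo t0 t1, HasDerivAt w (γ * w t) t := by
    intro t ht
    have htI : t ∈ Icc t0 t1 := ⟨le_of_lt ht.1, le_of_lt ht.2⟩
    have h1 : HasDerivAt (fun t => 1 - f t) (-(γ * f t * (1 - f t))) t := (hd t ht).const_sub 1
    have := (hd t ht).div h1 (hne t htI)
    refine this.congr_deriv (Eq.symm ?_)
    have hnz := hne t htI
    show γ * (f t / (1 - f t)) = _
    rw [eq_div_iff (pow_ne_zero 2 hnz)]
    field_simp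
    ring
  -- Step 3: w(t) exp(-γ t) is constant
  set v : ℝ → ℝ := fun t => w t * Real.exp (-(γ * t)) with hv
  have hvd : ∀ t ∈ Ioo t0 t1, HasDerivAt v 0 t := by
    intro t ht
    have h2 : HasDerivAt (fun t => Real.exp (-(γ * t))) (-γ * Real.exp (-(γ * t))) t := by
      have := (Real.hasDerivAt_exp (-(γ * t))).comp t
        (((hasDerivAt_id t).const_mul γ).neg)
      simpa [mul_comm, Function.comp_def, Pi.neg_apply] using this
    have := (hwd t ht).mul h2
    exact this.congr_deriv (by ring)
  have hwc : ContinuousOn w (Icc t0 t1) :=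
    hc.div (continuousOn_const.sub hc) hne
  have hvc : ContinuousOn v (Icc t0 t1) :=
    hwc.mul ((Real.continuous_exp.comp (continuous_const.mul continuous_id).neg).continuousOn)
  have key : v t1 = v t0 := myConstOn h01 hvc hvd
  have hkey : w t1 = w t0 * Real.exp (γ * (t1 - t0)) := by
    have h2 := congrArg (fun r => r * Real.exp (γ * t1)) key
    rw [mul_assoc, mul_assoc, ← Real.exp_add, ← Real.exp_add] at h2
    rw [show -(γ * t1) + γ * t1 = 0 by ring] at h2
    rw [show -(γ * t0) + γ * t1 = γ * (t1 - t0) by ring] at h2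
    simpa using h2
  -- Step 4: conclude
  have e1 : t1 ∈ Icc t0 t1 := ⟨h01, le_refl _⟩
  have hf1lt : f t1 < 1 := hlt1 t1 e1
  have hw0pos : 0 < w t0 := by
    have h1 : (0:ℝ) < f t0 := h0.1
    have h2 : (0:ℝ) < 1 - f t0 := by linarith [h0.2]
    exact div_pos h1 h2
  have hw1pos : 0 < w t1 := by
    rw [hkey]; positivity
  have hf1pos : 0 < f t1 := by
    have hnz1 : (1:ℝ) - f t1 ≠ 0 := hne t1 e1
    have : f t1 = w t1 * (1 - f t1) := by
      exact (div_mul_cancel₀ (f t1) hnz1).symm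
    rw [this]
    have : (0:ℝ) < 1 - f t1 := by linarith
    positivity
  exact ⟨⟨hf1pos, hf1lt⟩, hkey⟩

set_option maxHeartbeats 1000000 in
/-- ODE comparison underlying optimality of influencing first when the organic drift
coefficient `c > 0`: `β_F(T) > β_L(T)`. -/
theorem influence_first_optimal_of_pos_drift (c a M T b β₀ : ℝ)
    (hc : 0 < c) (ha : 0 < a) (hM : 1 ≤ M) (hT : 0 < T)
    (hb : b ∈ Set.Ioo (0:ℝ) 1) (hβ₀ : β₀ ∈ Set.Ioo (0:ℝ) 1)
    (βF βL : ℝ → ℝ) (hFc : Continuous βF) (hLc : Continuous βL)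
    (hF0 : βF 0 = β₀) (hL0 : βL 0 = β₀)
    (hF1 : ∀ t ∈ Set.Ioo 0 (b * T), HasDerivAt βF ((a / M) * (1 - βF t)) t)
    (hF2 : ∀ t ∈ Set.Ioo (b * T) T, HasDerivAt βF ((c / M) * βF t * (1 - βF t)) t)
    (hL1 : ∀ t ∈ Set.Ioo 0 ((1 - b) * T), HasDerivAt βL ((c / M) * βL t * (1 - βL t)) t)
    (hL2 : ∀ t ∈ Set.Ioo ((1 - b) * T) T, HasDerivAt βL ((a / M) * (1 - βL t)) t) :
    βL T < βF T := by
  have hM0 : (0:ℝ) < M := lt_of_lt_of_le one_pos hM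
  have hα : (0:ℝ) < a / M := div_pos ha hM0
  have hγ : (0:ℝ) < c / M := div_pos hc hM0
  have hs : (0:ℝ) < b * T := mul_pos hb.1 hT
  have hu : (0:ℝ) < (1 - b) * T := mul_pos (by linarith [hb.2]) hT
  have hsT : b * T < T := by nlinarith [hb.2]
  have huT : (1 - b) * T < T := by nlinarith [hb.1]
  set P : ℝ := Real.exp (-(a / M) * (b * T)) with hP
  set Q : ℝ := Real.exp ((c / M) * ((1 - b) * T)) with hQ
  have hPpos : 0 < P := Real.exp_pos _
  have hP1 : P < 1 := Real.exp_lt_one_iff.mpr (by nlinarith)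
  have hQ1 : 1 < Q := Real.one_lt_exp_iff.mpr (by nlinarith)
  -- βF on [0, bT] : linear flow
  have eF1 : 1 - βF (b * T) = (1 - β₀) * P := by
    have := linear_flow (le_of_lt hs) hFc.continuousOn hF1
    rw [hF0] at this
    simpa [hP] using this
  have hx1 : β₀ < 1 := hβ₀.2
  have hx0 : 0 < β₀ := hβ₀.1
  have hy_mem : βF (b * T) ∈ Set.Ioo (0:ℝ) 1 := by
    constructor
    · nlinarith
    · nlinarith
  -- βF on [bT, T] : logistic flow
  have eF2 := logistic_flow (le_of_lt hsT) hγ hFc.continuousOn hF2 hy_mem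
  have hFmem : βF T ∈ Set.Ioo (0:ℝ) 1 := eF2.1
  have eF2' : βF T / (1 - βF T) = βF (b * T) / (1 - βF (b * T)) * Q := by
    have := eF2.2
    rw [show (c / M) * (T - b * T) = (c / M) * ((1 - b) * T) by ring] at this
    exact this
  -- βL on [0, (1-b)T] : logistic flow
  have eL1 := logistic_flow (le_of_lt hu) hγ hLc.continuousOn hL1 (by rw [hL0]; exact hβ₀)
  have hzmem : βL ((1 - b) * T) ∈ Set.Ioo (0:ℝ) 1 := eL1.1
  have eL1' : βL ((1 - b) * T) / (1 - βL ((1 - b) * T)) = β₀ / (1 - β₀) * Q := by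
    have := eL1.2
    rw [hL0] at this
    simpa [hQ] using this
  -- βL on [(1-b)T, T] : linear flow
  have eL2 : 1 - βL T = (1 - βL ((1 - b) * T)) * P := by
    have := linear_flow (le_of_lt huT) hLc.continuousOn hL2
    rw [show -(a / M) * (T - (1 - b) * T) = -(a / M) * (b * T) by ring] at this
    exact this
  -- Final algebra
  set y := βF (b * T) with hy
  set z := βL ((1 - b) * T) with hz
  have hy0 : 0 < y := hy_mem.1
  have hy1 : y < 1 := hy_mem.2
  have hz0 : 0 < z := hzmem.1
  have hz1 : z < 1 := hzmem.2
  have hF0' : 0 < βF T := hFmem.1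
  have hF1' : βF T < 1 := hFmem.2
  -- cross-multiplied forms
  have cF : βF T * (1 - y) = y * Q * (1 - βF T) := by
    have h1 : (1 - βF T) ≠ 0 := by linarith
    have h2 : (1 - y) ≠ 0 := by linarith
    rw [div_mul_eq_mul_div, div_eq_div_iff h1 h2] at eF2'
    exact eF2'
  have cL : z * (1 - β₀) = β₀ * Q * (1 - z) := by
    have h1 : (1 - z) ≠ 0 := by linarith
    have h2 : (1 - β₀) ≠ 0 := by linarith
    rw [div_mul_eq_mul_div, div_eq_div_iff h1 h2] at eL1'
    exact eL1'
  -- denominators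
  have hD1 : 0 < 1 - y + y * Q := by nlinarith
  have hD2 : 0 < 1 - β₀ + β₀ * Q := by nlinarith
  have hFval : 1 - βF T = (1 - β₀) * P / (1 - y + y * Q) := by
    rw [eq_div_iff (ne_of_gt hD1)]
    linear_combination eF1 - cF
  have hzval : 1 - z = (1 - β₀) / (1 - β₀ + β₀ * Q) := by
    rw [eq_div_iff (ne_of_gt hD2)]
    linear_combination -cL
  have hLval : 1 - βL T = (1 - β₀) * P / (1 - β₀ + β₀ * Q) := by
    rw [eL2, hzval]
    ring
  have hDlt : 1 - β₀ + β₀ * Q < 1 - y + y * Q := by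
    have hy_eq : y = 1 - (1 - β₀) * P := by linarith [eF1]
    rw [hy_eq]
    nlinarith [mul_pos (mul_pos (show (0:ℝ) < 1 - β₀ by linarith) (show (0:ℝ) < Q - 1 by linarith)) (show (0:ℝ) < 1 - P by linarith)]
  have hnum : 0 < (1 - β₀) * P := mul_pos (by linarith) hPpos
  have : 1 - βF T < 1 - βL T := by
    rw [hFval, hLval]
    exact div_lt_div_of_pos_left hnum hD2 hDlt
  linarith
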